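/- Let G be a topological group equipped with dilations δ as in the context. Let S ⊆ G be a subsemigroup with nonempty interior satisfying δ_t(S) = S for all t > 0. Then S is almost regular: S ⊆ closure(interior(S)). -/

import Mathlib

/-- In a topological group `G` equipped with a family of dilations `δ`, every
subsemigroup `S` with nonempty interior and `δ_t (S) = S` for all `t > 0` is almost
regular: `S ⊆ closure (interior S)`. -/
theorem conical_semigroup_almost_regular
    {G : Type*} [Group G] [TopologicalSpace G] [IsTopologicalGroup G]
    (δ : ℝ → G → G)
    (hhom : ∀ t : ℝ, 0 ≤ t → ∀ x y : G, δ t (x * y) = δ t x * δ t y)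
    (hone : ∀ x : G, δ 1 x = x)
    (hcomp : ∀ s t : ℝ, 0 ≤ s → 0 ≤ t → ∀ x : G, δ s (δ t x) = δ (s * t) x)
    (hzero : ∀ x : G, δ 0 x = 1)
    (hcont : ContinuousOn (fun p : ℝ × G => δ p.1 p.2) (Set.Ici 0 ×ˢ Set.univ))
    (S : Set G)
    (hmul : ∀ x ∈ S, ∀ y ∈ S, x * y ∈ S)
    (hint : (interior S).Nonempty)
    (hcone : ∀ t : ℝ, 0 < t → δ t '' S = S) :
    S ⊆ closure (interior S) := by
  obtain ⟨u, hu⟩ := hint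
  intro x hx
  -- continuity of `δ t` for `t > 0`
  have hconts : ∀ t : ℝ, 0 < t → Continuous (δ t) := by
    intro t ht
    rw [continuous_iff_continuousAt]
    intro y
    have hmem : Set.Ici (0:ℝ) ×ˢ (Set.univ : Set G) ∈ nhds ((t, y) : ℝ × G) :=
      prod_mem_nhds (Ici_mem_nhds ht) Filter.univ_mem
    have hCA : ContinuousAt (fun p : ℝ × G => δ p.1 p.2) (t, y) :=
      hcont.continuousAt hmem
    exact hCA.comp (Continuous.continuousAt (by continuity))
  -- `δ t u ∈ interior S` for `t > 0`
  have hdint : ∀ t : ℝ, 0 < t → δ t u ∈ interior S := by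
    intro t ht
    have htinv : (0:ℝ) < t⁻¹ := by positivity
    refine mem_interior.mpr ⟨δ t⁻¹ ⁻¹' interior S, ?_, ?_, ?_⟩
    · intro y hy
      have hyS : δ t⁻¹ y ∈ S := interior_subset hy
      have : δ t (δ t⁻¹ y) ∈ δ t '' S := Set.mem_image_of_mem _ hyS
      rw [hcone t ht] at this
      rwa [hcomp t t⁻¹ ht.le htinv.le, mul_inv_cancel₀ ht.ne', hone] at this
    · exact isOpen_interior.preimage (hconts _ htinv)
    · show δ t⁻¹ (δ t u) ∈ interior S
      rwa [hcomp t⁻¹ t htinv.le ht.le, inv_mul_cancel₀ ht.ne', hone]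
  -- `x * interior S ⊆ interior S`
  have hxint : ∀ v ∈ interior S, x * v ∈ interior S := by
    intro v hv
    refine mem_interior.mpr ⟨(fun y => x⁻¹ * y) ⁻¹' interior S, ?_, ?_, ?_⟩
    · intro y hy
      have : x * (x⁻¹ * y) ∈ S := hmul x hx _ (interior_subset hy)
      simpa using this
    · exact isOpen_interior.preimage (by continuity)
    · show x⁻¹ * (x * v) ∈ interior S
      simpa using hv
  -- `x * δ t u → x` as `t → 0⁺`
  have htend : Filter.Tendsto (fun t : ℝ => x * δ t u) (nhdsWithin 0 (Set.Ioi 0)) (nhds x) := by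
    have h0 : ContinuousWithinAt (fun p : ℝ × G => δ p.1 p.2)
        (Set.Ici 0 ×ˢ Set.univ) (0, u) := hcont _ ⟨Set.self_mem_Ici, trivial⟩
    have hg : Filter.Tendsto (fun t : ℝ => ((t, u) : ℝ × G)) (nhdsWithin 0 (Set.Ioi 0))
        (nhdsWithin (0, u) (Set.Ici 0 ×ˢ Set.univ)) := by
      rw [tendsto_nhdsWithin_iff]
      constructor
      · exact ((continuous_id.prodMk continuous_const).tendsto 0).mono_left
          nhdsWithin_le_nhds
      · filter_upwards [self_mem_nhdsWithin] with t ht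
        exact ⟨Set.mem_Ici.mpr (le_of_lt ht), trivial⟩
    have : Filter.Tendsto (fun t : ℝ => δ t u) (nhdsWithin 0 (Set.Ioi 0)) (nhds (δ 0 u)) :=
      (h0.tendsto).comp hg
    rw [hzero u] at this
    have := (tendsto_const_nhds : Filter.Tendsto (fun _ : ℝ => x) _ (nhds x)).mul this
    simpa using this
  exact mem_closure_of_tendsto htend (Filter.eventually_of_mem self_mem_nhdsWithin
    fun t ht => hxint _ (hdint t ht))
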